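/- Consider the generalized extreme value density p_{μ,σ,ξ}(y) = (1/σ)(1 + ξ(y−μ)/σ)^{−1−1/ξ} exp(−(1 + ξ(y−μ)/σ)^{−1/ξ}) for ξ ≠ 0 on {y : 1 + ξ(y−μ)/σ > 0}, p_{μ,σ,0}(y) = (1/σ) e^{−(y−μ)/σ} exp(−e^{−(y−μ)/σ}), and p_{μ,σ,ξ}(y) = 0 otherwise. Then the map (μ, σ, ξ, y) ↦ p_{μ,σ,ξ}(y) is continuous on ℝ × (0, ∞) × (−1, ∞) × ℝ. -/

import Mathlib

open Real Filter Topology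

noncomputable def gevH (x : ℝ) : ℝ := if x = 0 then 1 else Real.log (1 + x) / x

lemma gevH_continuousAt {x : ℝ} (hx : -1 < x) : ContinuousAt gevH x := by
  rcases eq_or_ne x 0 with rfl | hx0
  · have hderiv : HasDerivAt (fun y : ℝ => Real.log (1 + y)) 1 0 := by
      have h1 : HasDerivAt (fun y : ℝ => (1:ℝ) + y) 1 0 := by
        simpa using (hasDerivAt_id (0 : ℝ)).const_add (1:ℝ)
      have h : HasDerivAt Real.log 1⁻¹ ((fun y : ℝ => (1:ℝ) + y) 0) := by
        simpa using Real.hasDerivAt_log (one_ne_zero)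
      simpa [Function.comp_def] using h.comp 0 h1
    have hslope := hasDerivAt_iff_tendsto_slope.mp hderiv
    have h1 : Tendsto gevH (𝓝[≠] (0:ℝ)) (𝓝 1) := by
      refine hslope.congr' ?_
      filter_upwards [self_mem_nhdsWithin] with y hy
      simp only [Set.mem_compl_iff, Set.mem_singleton_iff] at hy
      simp [slope_def_field, gevH, hy, div_eq_div_iff]
    have : Tendsto gevH (𝓝 (0:ℝ)) (𝓝 1) := by
      rw [← nhdsNE_sup_pure (0:ℝ), tendsto_sup]
      exact ⟨h1, by simpa [gevH] using tendsto_pure_nhds gevH (0:ℝ)⟩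
    simpa [ContinuousAt, gevH] using this
  · have hcont : ContinuousAt (fun y : ℝ => Real.log (1 + y) / y) x := by
      exact ((Real.continuousAt_log (by linarith)).comp
        (by fun_prop : ContinuousAt (fun y : ℝ => 1 + y) x)).div continuousAt_id hx0
    refine hcont.congr ?_
    filter_upwards [isOpen_compl_singleton.mem_nhds hx0] with y hy
    simp only [Set.mem_compl_iff, Set.mem_singleton_iff] at hy
    simp [gevH, hy]


/-- The generalized extreme value (GEV) density with location `μ`, scale `σ`, shape `ξ`. -/
noncomputable def gevDensity (μ σ ξ y : ℝ) : ℝ :=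
  if ξ = 0 then
    σ⁻¹ * Real.exp (-((y - μ) / σ)) * Real.exp (-Real.exp (-((y - μ) / σ)))
  else if 0 < 1 + ξ * ((y - μ) / σ) then
    σ⁻¹ * (1 + ξ * ((y - μ) / σ)) ^ (-1 - 1 / ξ)
      * Real.exp (-((1 + ξ * ((y - μ) / σ)) ^ (-1 / ξ)))
  else 0

lemma gevH_mul_eq (a b : ℝ) (ha : a ≠ 0) (hb : b ≠ 0) :
    b * gevH (a * b) = Real.log (1 + a * b) * a⁻¹ := by
  rw [gevH, if_neg (mul_ne_zero ha hb)]
  field_simp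

lemma gev_eq (μ σ ξ y : ℝ) (ht : 0 < 1 + ξ * ((y - μ) / σ)) :
    gevDensity μ σ ξ y =
      σ⁻¹ * Real.exp (-((1 + ξ) * (((y - μ) / σ) * gevH (ξ * ((y - μ) / σ)))))
        * Real.exp (-Real.exp (-(((y - μ) / σ) * gevH (ξ * ((y - μ) / σ))))) := by
  set z := (y - μ) / σ with hz
  rcases eq_or_ne ξ 0 with rfl | hξ
  · simp [gevDensity, gevH, hz]
  · rcases eq_or_ne z 0 with hz0 | hz0
    · have h0 : (y - μ) / σ = 0 := hz0
      simp [gevDensity, gevH, hξ, h0, hz0, Real.one_rpow]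
    · have hξz : ξ * z ≠ 0 := mul_ne_zero hξ hz0
      have hW : z * gevH (ξ * z) = Real.log (1 + ξ * z) / ξ := by
        rw [gevH, if_neg hξz]
        field_simp
      have e1 : Real.log (1 + ξ * z) * (-1 - 1 / ξ)
          = -((1 + ξ) * (Real.log (1 + ξ * z) / ξ)) := by
        field_simp
        ring
      have e2 : Real.log (1 + ξ * z) * (-1 / ξ) = -(Real.log (1 + ξ * z) / ξ) := by
        field_simp
      rw [gevDensity, if_neg hξ, if_pos ht, hW,
        Real.rpow_def_of_pos ht, Real.rpow_def_of_pos ht, e1, e2]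

/-- The GEV density is jointly continuous in `(μ, σ, ξ, y)` on
`ℝ × (0, ∞) × (−1, ∞) × ℝ`. -/
theorem gevDensity_continuousOn :
    ContinuousOn (fun q : ℝ × ℝ × ℝ × ℝ => gevDensity q.1 q.2.1 q.2.2.1 q.2.2.2)
      {q : ℝ × ℝ × ℝ × ℝ | 0 < q.2.1 ∧ -1 < q.2.2.1} := by
  intro q₀ hq₀
  obtain ⟨hσ₀, hξ₀⟩ := hq₀
  apply ContinuousAt.continuousWithinAt
  have hσne : q₀.2.1 ≠ 0 := ne_of_gt hσ₀
  have hσc : ContinuousAt (fun q : ℝ × ℝ × ℝ × ℝ => q.2.1) q₀ := by fun_prop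
  have hξc : ContinuousAt (fun q : ℝ × ℝ × ℝ × ℝ => q.2.2.1) q₀ := by fun_prop
  have hzc : ContinuousAt (fun q : ℝ × ℝ × ℝ × ℝ => (q.2.2.2 - q.1) / q.2.1) q₀ :=
    ContinuousAt.div (by fun_prop) hσc hσne
  have htc : ContinuousAt
      (fun q : ℝ × ℝ × ℝ × ℝ => 1 + q.2.2.1 * ((q.2.2.2 - q.1) / q.2.1)) q₀ :=
    continuousAt_const.add (hξc.mul hzc)
  set z₀ := (q₀.2.2.2 - q₀.1) / q₀.2.1 with hz₀def
  set t₀ := 1 + q₀.2.2.1 * z₀ with ht₀def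
  rcases lt_trichotomy t₀ 0 with ht₀ | ht₀ | ht₀
  · -- t₀ < 0 : density vanishes in a neighborhood
    have hξne : q₀.2.2.1 ≠ 0 := by
      intro h0
      rw [ht₀def, h0] at ht₀
      simp at ht₀
      linarith
    have hev : ∀ᶠ q in 𝓝 q₀,
        gevDensity q.1 q.2.1 q.2.2.1 q.2.2.2 = 0 := by
      filter_upwards [hξc.eventually_ne hξne,
        htc.tendsto (Iio_mem_nhds ht₀)] with q h1 h2
      rw [gevDensity, if_neg h1, if_neg (not_lt.mpr (le_of_lt h2))]
    have hev' : (fun q : ℝ × ℝ × ℝ × ℝ => gevDensity q.1 q.2.1 q.2.2.1 q.2.2.2)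
        =ᶠ[𝓝 q₀] (fun _ => (0:ℝ)) := hev
    exact continuousAt_const.congr hev'.symm
  · -- t₀ = 0 : boundary case
    have hξz : q₀.2.2.1 * z₀ = -1 := by rw [ht₀def] at ht₀; linarith
    have hξne : q₀.2.2.1 ≠ 0 := by intro h; rw [h] at hξz; simp at hξz
    have hzne : z₀ ≠ 0 := by intro h; rw [h] at hξz; simp at hξz
    set T : Set (ℝ × ℝ × ℝ × ℝ) :=
      {q | 0 < 1 + q.2.2.1 * ((q.2.2.2 - q.1) / q.2.1)} with hT
    have hf0 : gevDensity q₀.1 q₀.2.1 q₀.2.2.1 q₀.2.2.2 = 0 := by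
      have hnt : ¬ (0 < 1 + q₀.2.2.1 * ((q₀.2.2.2 - q₀.1) / q₀.2.1)) := by
        rw [← hz₀def, ← ht₀def, ht₀]
        exact lt_irrefl 0
      simp [gevDensity, hξne, hnt]
    unfold ContinuousAt
    simp only [hf0]
    have hsplit : 𝓝 q₀ = 𝓝[T] q₀ ⊔ 𝓝[Tᶜ] q₀ := by
      rw [← nhdsWithin_union, Set.union_compl_self, nhdsWithin_univ]
    rw [hsplit, tendsto_sup]
    constructor
    · -- within T
      have htT : Tendsto (fun q : ℝ × ℝ × ℝ × ℝ =>
          1 + q.2.2.1 * ((q.2.2.2 - q.1) / q.2.1)) (𝓝[T] q₀) (𝓝[>] (0:ℝ)) := by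
        rw [tendsto_nhdsWithin_iff]
        constructor
        · have h0 : 1 + q₀.2.2.1 * ((q₀.2.2.2 - q₀.1) / q₀.2.1) = 0 := by
            rw [← hz₀def, ← ht₀def]; exact ht₀
          exact h0 ▸ htc.tendsto.mono_left nhdsWithin_le_nhds
        · filter_upwards [self_mem_nhdsWithin] with q hq
          exact hq
      have hlog : Tendsto (fun q : ℝ × ℝ × ℝ × ℝ =>
          Real.log (1 + q.2.2.1 * ((q.2.2.2 - q.1) / q.2.1))) (𝓝[T] q₀) atBot :=
        Real.tendsto_log_nhdsGT_zero.comp htT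
      have hξinv : Tendsto (fun q : ℝ × ℝ × ℝ × ℝ => (q.2.2.1)⁻¹) (𝓝[T] q₀)
          (𝓝 (q₀.2.2.1)⁻¹) :=
        ((hξc.inv₀ hξne).tendsto).mono_left nhdsWithin_le_nhds
      set W : (ℝ × ℝ × ℝ × ℝ) → ℝ := fun q =>
        Real.log (1 + q.2.2.1 * ((q.2.2.2 - q.1) / q.2.1)) * (q.2.2.1)⁻¹ with hWdef
      have hfe : (fun q : ℝ × ℝ × ℝ × ℝ => gevDensity q.1 q.2.1 q.2.2.1 q.2.2.2)
          =ᶠ[𝓝[T] q₀] (fun q => (q.2.1)⁻¹ * Real.exp (-((1 + q.2.2.1) * W q))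
            * Real.exp (-Real.exp (-W q))) := by
        filter_upwards [self_mem_nhdsWithin,
          (hξc.eventually_ne hξne).filter_mono nhdsWithin_le_nhds,
          (hzc.eventually_ne hzne).filter_mono nhdsWithin_le_nhds] with q h1 h2 h3
        have ht' : 0 < 1 + q.2.2.1 * ((q.2.2.2 - q.1) / q.2.1) := h1
        rw [gev_eq _ _ _ _ ht']
        rw [gevH_mul_eq _ _ h2 h3]
      rcases lt_or_gt_of_ne hξne with hneg | hpos
      · -- ξ₀ < 0 : W → atTop and each factor converges
        have hW : Tendsto W (𝓝[T] q₀) atTop :=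
          hlog.atBot_mul_neg (inv_lt_zero.mpr hneg) hξinv
        have t1 : Tendsto (fun q : ℝ × ℝ × ℝ × ℝ => (q.2.1)⁻¹) (𝓝[T] q₀)
            (𝓝 (q₀.2.1)⁻¹) :=
          ((hσc.inv₀ hσne).tendsto).mono_left nhdsWithin_le_nhds
        have t2 : Tendsto (fun q : ℝ × ℝ × ℝ × ℝ => Real.exp (-((1 + q.2.2.1) * W q)))
            (𝓝[T] q₀) (𝓝 0) := by
          have hexp : Tendsto (fun q : ℝ × ℝ × ℝ × ℝ => -(1 + q.2.2.1) * W q)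
              (𝓝[T] q₀) atBot :=
            Tendsto.neg_mul_atTop (by linarith : -(1 + q₀.2.2.1) < 0)
              (((continuousAt_const.add hξc).neg.tendsto).mono_left nhdsWithin_le_nhds) hW
          have h := Real.tendsto_exp_atBot.comp hexp
          refine h.congr fun q => ?_
          simp only [Function.comp_apply]
          congr 1
          ring
        have t3 : Tendsto (fun q : ℝ × ℝ × ℝ × ℝ => Real.exp (-Real.exp (-W q)))
            (𝓝[T] q₀) (𝓝 1) := by
          have h1 : Tendsto (fun q : ℝ × ℝ × ℝ × ℝ => Real.exp (-W q)) (𝓝[T] q₀) (𝓝 0) :=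
            Real.tendsto_exp_atBot.comp (tendsto_neg_atTop_atBot.comp hW)
          have h2 : Tendsto (fun q : ℝ × ℝ × ℝ × ℝ => -Real.exp (-W q)) (𝓝[T] q₀)
              (𝓝 0) := by simpa using h1.neg
          have h3 := (Real.continuous_exp.tendsto 0).comp h2
          simpa [Function.comp_def] using h3
        exact Tendsto.congr' hfe.symm (by simpa using (t1.mul t2).mul t3)
      · -- ξ₀ > 0 : squeeze by u ^ c * exp (-u), u = exp (-W) → ∞
        have hW : Tendsto W (𝓝[T] q₀) atBot :=
          hlog.atBot_mul_pos (inv_pos.mpr hpos) hξinv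
        have hu : Tendsto (fun q : ℝ × ℝ × ℝ × ℝ => Real.exp (-W q)) (𝓝[T] q₀) atTop :=
          Real.tendsto_exp_atTop.comp (tendsto_neg_atBot_atTop.comp hW)
        have hbound : Tendsto (fun q : ℝ × ℝ × ℝ × ℝ =>
            (q.2.1)⁻¹ * (Real.exp (-W q) ^ (2 + q₀.2.2.1)
              * Real.exp (-1 * Real.exp (-W q)))) (𝓝[T] q₀) (𝓝 ((q₀.2.1)⁻¹ * 0)) :=
          (((hσc.inv₀ hσne).tendsto).mono_left nhdsWithin_le_nhds).mul
            ((tendsto_rpow_mul_exp_neg_mul_atTop_nhds_zero (2 + q₀.2.2.1) 1 one_pos).comp hu)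
        rw [mul_zero] at hbound
        have hσpos : ∀ᶠ q : ℝ × ℝ × ℝ × ℝ in 𝓝 q₀, 0 < q.2.1 :=
          hσc.tendsto (Ioi_mem_nhds hσ₀)
        have hξlt : ∀ᶠ q : ℝ × ℝ × ℝ × ℝ in 𝓝 q₀, q.2.2.1 < q₀.2.2.1 + 1 :=
          hξc.tendsto (Iio_mem_nhds (lt_add_one q₀.2.2.1))
        refine squeeze_zero' ?_ ?_ hbound
        · filter_upwards [hfe, hσpos.filter_mono nhdsWithin_le_nhds] with q h1 h2
          rw [h1]
          have h2' : (0:ℝ) < q.2.1 := h2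
          positivity
        · filter_upwards [hfe, hσpos.filter_mono nhdsWithin_le_nhds,
            hξlt.filter_mono nhdsWithin_le_nhds,
            hu.eventually_ge_atTop 1] with q h1 h2 h3 h4
          rw [h1]
          have h2' : (0:ℝ) < q.2.1 := h2
          have h3' : q.2.2.1 < q₀.2.2.1 + 1 := h3
          have e1 : Real.exp (-((1 + q.2.2.1) * W q)) = Real.exp (-W q) ^ (1 + q.2.2.1) := by
            rw [Real.rpow_def_of_pos (Real.exp_pos _), Real.log_exp]
            ring_nf
          have e2 : Real.exp (-Real.exp (-W q)) = Real.exp (-1 * Real.exp (-W q)) := by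
            ring_nf
          rw [e1, e2, mul_assoc]
          refine mul_le_mul_of_nonneg_left ?_ (le_of_lt (inv_pos.mpr h2'))
          exact mul_le_mul_of_nonneg_right
            (Real.rpow_le_rpow_of_exponent_le h4 (by linarith))
            (le_of_lt (Real.exp_pos _))
    · -- within Tᶜ : the density is eventually 0
      have hev : (fun _ : ℝ × ℝ × ℝ × ℝ => (0:ℝ)) =ᶠ[𝓝[Tᶜ] q₀]
          (fun q => gevDensity q.1 q.2.1 q.2.2.1 q.2.2.2) := by
        filter_upwards [(hξc.eventually_ne hξne).filter_mono nhdsWithin_le_nhds,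
          self_mem_nhdsWithin] with q h1 h2
        have h2' : ¬ (0 < 1 + q.2.2.1 * ((q.2.2.2 - q.1) / q.2.1)) := h2
        rw [gevDensity, if_neg h1, if_neg h2']
      exact Tendsto.congr' hev tendsto_const_nhds
  · -- t₀ > 0 : interior case
    have hgt : -1 < q₀.2.2.1 * z₀ := by rw [ht₀def] at ht₀; linarith
    have hWc : ContinuousAt
        (fun q : ℝ × ℝ × ℝ × ℝ =>
          ((q.2.2.2 - q.1) / q.2.1) * gevH (q.2.2.1 * ((q.2.2.2 - q.1) / q.2.1))) q₀ := by
      have hin : ContinuousAt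
          (fun q : ℝ × ℝ × ℝ × ℝ => q.2.2.1 * ((q.2.2.2 - q.1) / q.2.1)) q₀ := hξc.mul hzc
      have hcomp : ContinuousAt
          (fun q : ℝ × ℝ × ℝ × ℝ => gevH (q.2.2.1 * ((q.2.2.2 - q.1) / q.2.1))) q₀ :=
        ContinuousAt.comp (x := q₀) (gevH_continuousAt hgt) hin
      exact hzc.mul hcomp
    have hGc : ContinuousAt
        (fun q : ℝ × ℝ × ℝ × ℝ =>
          (q.2.1)⁻¹ * Real.exp (-((1 + q.2.2.1)
              * (((q.2.2.2 - q.1) / q.2.1) * gevH (q.2.2.1 * ((q.2.2.2 - q.1) / q.2.1)))))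
            * Real.exp (-Real.exp
              (-(((q.2.2.2 - q.1) / q.2.1)
                * gevH (q.2.2.1 * ((q.2.2.2 - q.1) / q.2.1)))))) q₀ := by
      exact ((hσc.inv₀ hσne).mul
          (((continuousAt_const.add hξc).mul hWc).neg.rexp)).mul hWc.neg.rexp.neg.rexp
    refine hGc.congr ?_
    filter_upwards [htc.tendsto (Ioi_mem_nhds ht₀)] with q hq
    exact (gev_eq _ _ _ _ hq).symm
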